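/- Let Ω ⊆ ℝⁿ be open, ε : {1,…,n} → {1, −1}, and let k : Ω → ℝⁿ, h : Ω → ℝ, m : Ω → ℝ be C¹. Define p(u) = (1, u¹, …, uⁿ, ½Σ_iεⁱ(uⁱ)², h(u), 0) and s(u) = (0, ε¹k₁(u), …, εⁿkₙ(u), Σᵢ kᵢ(u)uⁱ − h(u), m(u), 1) in ℝ^{n+4}, and equip ℝ^{n+4} with the bilinear form (X,Y) = Σᵢ εⁱ XᵢYᵢ − X₀Y_{n+1} − X_{n+1}Y₀ − X_{n+2}Y_{n+3} − X_{n+3}Y_{n+2}. If the Legendre condition holds, i.e., (s(u), Dp(u)[v]) = 0 for all u ∈ Ω and all v ∈ ℝⁿ, then kᵢ(u) = ∂h/∂uⁱ(u) for all i and u ∈ Ω: the family of lines spanned by p and s is the family of generators of the ruled hypersurface of the Hamiltonian system with Hamiltonian density h. -/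

import Mathlib

/-- The symmetric bilinear form
`(X,Y) = Σᵢ εⁱ XᵢYᵢ − X₀Y_{n+1} − X_{n+1}Y₀ − X_{n+2}Y_{n+3} − X_{n+3}Y_{n+2}`
on `ℝ^{n+4}`, realized as `ℝ × (Fin n → ℝ) × ℝ × ℝ × ℝ` with coordinates
`(X₀, X₁…Xₙ, X_{n+1}, X_{n+2}, X_{n+3})`. -/
noncomputable def formQ (n : ℕ) (ε : Fin n → ℝ)
    (X Y : ℝ × (Fin n → ℝ) × ℝ × ℝ × ℝ) : ℝ :=
  (∑ i : Fin n, ε i * X.2.1 i * Y.2.1 i) - X.1 * Y.2.2.1 - X.2.2.1 * Y.1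
    - X.2.2.2.1 * Y.2.2.2.2 - X.2.2.2.2 * Y.2.2.2.1

/-- Let `k : Ω → ℝⁿ`, `h, m : Ω → ℝ` be `C¹` on the open set
`Ω`, and set `p(u) = (1, u, ½Σεⁱ(uⁱ)², h(u), 0)` and
`s(u) = (0, ε¹k₁(u), …, εⁿkₙ(u), Σᵢkᵢ(u)uⁱ − h(u), m(u), 1)`. If the Legendre
condition `(s(u), Dp(u)[v]) = 0` holds for all `u ∈ Ω` and all `v ∈ ℝⁿ`, then
`kᵢ(u) = ∂h/∂uⁱ(u)` for all `i` and `u ∈ Ω`: the family of lines spanned by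
`p` and `s` is the family of generators of the ruled hypersurface of the
Hamiltonian system with Hamiltonian density `h`. -/
theorem stmt_17
    (n : ℕ) (Ω : Set (Fin n → ℝ)) (hΩ : IsOpen Ω)
    (ε : Fin n → ℝ) (hε : ∀ i, ε i = 1 ∨ ε i = -1)
    (k : (Fin n → ℝ) → (Fin n → ℝ)) (h m : (Fin n → ℝ) → ℝ)
    (hk : ContDiffOn ℝ 1 k Ω) (hh : ContDiffOn ℝ 1 h Ω)
    (hm : ContDiffOn ℝ 1 m Ω)
    (p s : (Fin n → ℝ) → ℝ × (Fin n → ℝ) × ℝ × ℝ × ℝ)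
    (hp : ∀ u, p u =
      (1, u, (1 / 2) * ∑ i : Fin n, ε i * (u i) ^ 2, h u, 0))
    (hs : ∀ u, s u =
      (0, fun i => ε i * k u i, (∑ i : Fin n, k u i * u i) - h u, m u, 1))
    (hLegendre : ∀ u ∈ Ω, ∀ v : Fin n → ℝ,
      formQ n ε (s u) (fderiv ℝ p u v) = 0) :
    ∀ u ∈ Ω, ∀ i : Fin n, k u i = fderiv ℝ h u (Pi.single i 1) := by
  intro u hu i
  have hdh : DifferentiableAt ℝ h u :=
    (hh.contDiffAt (hΩ.mem_nhds hu)).differentiableAt one_ne_zero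
  set q : (Fin n → ℝ) → ℝ := fun u => (1 / 2) * ∑ i : Fin n, ε i * (u i) ^ 2 with hqdef
  have hdq : DifferentiableAt ℝ q u := by
    apply DifferentiableAt.const_mul
    apply DifferentiableAt.fun_sum
    intro j _
    exact ((ContinuousLinearMap.proj j : (Fin n → ℝ) →L[ℝ] ℝ).differentiable.differentiableAt.pow 2).const_mul _
  have hpdef : p = fun u => (1, u, q u, h u, 0) := funext hp
  have hderiv : HasFDerivAt p
      ((0 : (Fin n → ℝ) →L[ℝ] ℝ).prod
        ((ContinuousLinearMap.id ℝ (Fin n → ℝ)).prod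
          ((fderiv ℝ q u).prod ((fderiv ℝ h u).prod 0)))) u := by
    rw [hpdef]
    exact HasFDerivAt.prodMk (hasFDerivAt_const (1 : ℝ) u) ((hasFDerivAt_id u).prodMk
      (hdq.hasFDerivAt.prodMk (hdh.hasFDerivAt.prodMk (hasFDerivAt_const (0 : ℝ) u))))
  have hL := hLegendre u hu (Pi.single i 1)
  rw [hderiv.fderiv, hs u] at hL
  simp only [formQ, ContinuousLinearMap.prod_apply, ContinuousLinearMap.zero_apply,
    ContinuousLinearMap.id_apply, mul_zero, zero_mul, sub_zero, one_mul] at hL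
  have hsum : (∑ j : Fin n, ε j * (ε j * k u j) * (Pi.single i 1 : Fin n → ℝ) j) = k u i := by
    rw [Finset.sum_eq_single i]
    · have := hε i
      rcases this with h1 | h1 <;> simp [h1, Pi.single_eq_same] <;> ring
    · intro j _ hj
      simp [Pi.single_eq_of_ne hj]
    · simp
  rw [hsum] at hL
  linarith
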